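/- Let (s_n)_{n=1}^∞ be the summing basis of c₀, where s_n = e_1 + e_2 + … + e_n and (e_n) is the unit vector basis of c₀. Then sh((s_n)) = 1. -/

import Mathlib

open Filter Metric NormedSpace Set Topology

noncomputable section

variable {E : Type*} [NormedAddCommGroup E] [NormedSpace ℝ E]

/-- `f` is the sequence of coordinate functionals of the Schauder basis `x`:
every vector has an expansion along `x`, and such expansions are unique. -/
structure IsSchauderBasis (x : ℕ → E) (f : ℕ → E →L[ℝ] ℝ) : Prop where
  expand : ∀ v : E,
    Tendsto (fun n => ∑ i ∈ Finset.range n, f i v • x i) atTop (𝓝 v)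
  unique : ∀ (a : ℕ → ℝ) (v : E),
    Tendsto (fun n => ∑ i ∈ Finset.range n, a i • x i) atTop (𝓝 v) → ∀ i, a i = f i v

/-- the `n`-th basis projection `P_n`. -/
def basisProj (x : ℕ → E) (f : ℕ → E →L[ℝ] ℝ) (n : ℕ) : E →L[ℝ] E :=
  ∑ i ∈ Finset.range n, (f i).smulRight (x i)

/-- closed linear span of `{y i : i ≥ n}`. -/
def tailSpan (y : ℕ → E) (n : ℕ) : Submodule ℝ E :=
  (Submodule.span ℝ (y '' {i | n ≤ i})).topologicalClosure

/-- `‖g‖_n` : the norm of the restriction of `g` to the closed span of the tail of `y`. -/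
def tailNorm (y : ℕ → E) (g : E →L[ℝ] ℝ) (n : ℕ) : ℝ :=
  ‖g.comp (tailSpan y n).subtypeL‖

/-- the quantity `sh` measuring how far a basic sequence is from being shrinking. -/
def sh (y : ℕ → E) : ℝ :=
  sSup ((fun g : E →L[ℝ] ℝ => limsup (tailNorm y g) atTop) '' {g | ‖g‖ ≤ 1})

/-- non-symmetrised Hausdorff distance `d̂(A,B)`. -/
def hdist (A B : Set E) : ℝ := sSup ((fun a => infDist a B) '' A)

/-- ordinary distance between two sets. -/
def setDist (A B : Set E) : ℝ := sInf {d : ℝ | ∃ a ∈ A, ∃ b ∈ B, d = dist a b}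

/-- `ca` measures how far a sequence is from being norm-Cauchy. -/
def ca (z : ℕ → E) : ℝ :=
  ⨅ n : ℕ, sSup {d : ℝ | ∃ k, n ≤ k ∧ ∃ l, n ≤ l ∧ d = ‖z k - z l‖}

/-- measure of non-separability. -/
def sep (A : Set E) : ℝ :=
  sInf {ε : ℝ | 0 < ε ∧ ∃ C : Set E, C.Countable ∧ ∀ a ∈ A, ∃ c ∈ C, ‖a - c‖ ≤ ε}

/-- `V`: the closed linear span of the coordinate functionals. -/
def dualSpan (g : ℕ → E →L[ℝ] ℝ) : Submodule ℝ (StrongDual ℝ E) :=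
  (Submodule.span ℝ (Set.range g)).topologicalClosure

lemma mem_dualSpan (g : ℕ → E →L[ℝ] ℝ) (i : ℕ) : g i ∈ dualSpan g :=
  Submodule.le_topologicalClosure _ (Submodule.subset_span ⟨i, rfl⟩)

/-- the quantity `bc₁` measuring non-bounded-completeness. -/
def bc1 (y : ℕ → E) : ℝ :=
  sSup {c : ℝ | ∃ a : ℕ → ℝ,
    (∀ n, ‖∑ i ∈ Finset.range n, a i • y i‖ ≤ 1) ∧
    c = ca (fun n => ∑ i ∈ Finset.range n, a i • y i)}

/-- the quantity `bc₂`. -/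
def bc2 (y : ℕ → E) (g : ℕ → E →L[ℝ] ℝ) : ℝ :=
  sSup {c : ℝ | ∃ φ : ↥(dualSpan g) →L[ℝ] ℝ,
    @norm _ (by exact (ContinuousLinearMap.hasOpNorm (𝕜 := ℝ) (𝕜₂ := ℝ)
      (E := ↥(dualSpan g)) (F := ℝ) (σ₁₂ := RingHom.id ℝ))) φ ≤ 1 ∧
    c = ca (fun n => ∑ i ∈ Finset.range n, φ ⟨g i, mem_dualSpan g i⟩ • y i)}

/-- the quantity `bc₃`. -/
def bc3 (y : ℕ → E) (g : ℕ → E →L[ℝ] ℝ) : ℝ :=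
  sSup {c : ℝ | ∃ Φ : StrongDual ℝ (StrongDual ℝ E), ‖Φ‖ ≤ 1 ∧
    c = ca (fun n => ∑ i ∈ Finset.range n, Φ (g i) • y i)}

/-- `α_Y(X)`: measures how well `Y` embeds isomorphically into `X`. -/
def alpha (Y X : Type*) [NormedAddCommGroup Y] [NormedSpace ℝ Y]
    [NormedAddCommGroup X] [NormedSpace ℝ X] : ℝ :=
  sSup {c : ℝ | ∃ T : Y →L[ℝ] X, ‖T‖ ≤ 1 ∧ ∀ y : Y, c * ‖y‖ ≤ ‖T y‖}

/-- `β_Y(X)`: measures how well `Y` embeds complementably into `X`. -/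
def beta (Y X : Type*) [NormedAddCommGroup Y] [NormedSpace ℝ Y]
    [NormedAddCommGroup X] [NormedSpace ℝ X] : ℝ :=
  sSup {c : ℝ | ∃ (A : X →L[ℝ] Y) (B : Y →L[ℝ] X),
    A.comp B = ContinuousLinearMap.id ℝ Y ∧ c * (‖A‖ * ‖B‖) ≤ 1}

/-- weak-star closure of a subset of the bidual. -/
def wstarClosure {X : Type*} [NormedAddCommGroup X] [NormedSpace ℝ X]
    (S : Set (StrongDual ℝ (StrongDual ℝ X))) : Set (StrongDual ℝ (StrongDual ℝ X)) :=
  {z | StrongDual.toWeakDual z ∈ closure (StrongDual.toWeakDual '' S)}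

/-- the measure of weak non-compactness `wk_X(A)`. -/
def wk (X : Type*) [NormedAddCommGroup X] [NormedSpace ℝ X] (A : Set X) : ℝ :=
  hdist (wstarClosure ((inclusionInDoubleDual ℝ X) '' A))
    (Set.range (inclusionInDoubleDual ℝ X))

/-- weak-star cluster points in the bidual of a sequence in `X`. -/
def wclust {X : Type*} [NormedAddCommGroup X] [NormedSpace ℝ X] (u : ℕ → X) :
    Set (StrongDual ℝ (StrongDual ℝ X)) :=
  {z | MapClusterPt (StrongDual.toWeakDual z) atTop
      (fun n => StrongDual.toWeakDual (inclusionInDoubleDual ℝ X (u n)))}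

/-- the measure of weak non-compactness `wck_X(A)`. -/
def wck (X : Type*) [NormedAddCommGroup X] [NormedSpace ℝ X] (A : Set X) : ℝ :=
  sSup {c : ℝ | ∃ u : ℕ → X, (∀ n, u n ∈ A) ∧
    c = setDist (wclust u) (Set.range (inclusionInDoubleDual ℝ X))}


/-- the canonical map `j : X → V*` for a subspace `V` of the dual,
`⟨j v, x*⟩ = x*(v)`. -/
def jfun {X : Type*} [NormedAddCommGroup X] [NormedSpace ℝ X]
    (V : Submodule ℝ (StrongDual ℝ X)) (v : X) : ↥V →L[ℝ] ℝ :=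
  (inclusionInDoubleDual ℝ X v).comp V.subtypeL

/-- the space `ℓ₁` of absolutely summable real sequences. -/
abbrev ell1 : Type := lp (fun _ : ℕ => ℝ) 1

/-- the space `c₀` of real sequences converging to zero, with the sup norm. -/
abbrev czero : Type := ZeroAtInftyContinuousMap ℕ ℝ

end

/-- the summing basis of `c₀`: `summingBasis n = e₁ + ⋯ + e_{n+1}` has its first `n+1`
coordinates equal to `1` and the remaining ones equal to `0`. -/
def summingBasis (n : ℕ) : czero :=
  ⟨⟨fun k => if k ≤ n then (1 : ℝ) else 0, continuous_of_discreteTopology⟩, by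
    rw [cocompact_eq_cofinite, Nat.cofinite_eq_atTop]
    refine Tendsto.congr' ?_ tendsto_const_nhds
    filter_upwards [eventually_ge_atTop (n + 1)] with k hk
    simp [(Nat.lt_of_succ_le hk).not_ge]⟩

set_option maxHeartbeats 2000000
set_option synthInstance.maxHeartbeats 400000

/-- evaluation at coordinate `0` as a continuous linear functional on `c₀`. -/
noncomputable def ev0 : czero →L[ℝ] ℝ :=
  LinearMap.mkContinuous
    { toFun := fun v => v 0
      map_add' := fun v w => rfl
      map_smul' := fun c v => rfl }
    1 (fun v => by
      rw [one_mul]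
      calc ‖v 0‖ = ‖v.toBCF 0‖ := rfl
        _ ≤ ‖v.toBCF‖ := BoundedContinuousFunction.norm_coe_le_norm _ _
        _ = ‖v‖ := ZeroAtInftyContinuousMap.norm_toBCF_eq_norm)

lemma ev0_norm_le : ‖ev0‖ ≤ 1 :=
  LinearMap.mkContinuous_norm_le _ zero_le_one _

lemma ev0_summingBasis (n : ℕ) : ev0 (summingBasis n) = 1 := by
  show (if 0 ≤ n then (1:ℝ) else 0) = 1
  simp

lemma tailNorm_nonneg {E : Type*} [NormedAddCommGroup E] [NormedSpace ℝ E]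
    (y : ℕ → E) (g : E →L[ℝ] ℝ) (n : ℕ) : 0 ≤ tailNorm y g n := by
  unfold tailNorm; exact norm_nonneg (g.comp (tailSpan y n).subtypeL)

lemma tailNorm_le {E : Type*} [NormedAddCommGroup E] [NormedSpace ℝ E]
    (y : ℕ → E) (g : E →L[ℝ] ℝ) (n : ℕ) : tailNorm y g n ≤ ‖g‖ := by
  refine ContinuousLinearMap.opNorm_le_bound _ (norm_nonneg g) (fun x => ?_)
  calc ‖g ((tailSpan y n).subtypeL x)‖ ≤ ‖g‖ * ‖(tailSpan y n).subtypeL x‖ :=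
        g.le_opNorm _
    _ = ‖g‖ * ‖x‖ := rfl

lemma norm_summingBasis_le (n : ℕ) : ‖summingBasis n‖ ≤ 1 := by
  rw [← ZeroAtInftyContinuousMap.norm_toBCF_eq_norm]
  refine BoundedContinuousFunction.norm_le zero_le_one |>.2 (fun k => ?_)
  show ‖(if k ≤ n then (1:ℝ) else 0)‖ ≤ 1
  split_ifs <;> simp

lemma summingBasis_mem_tailSpan (n : ℕ) :
    summingBasis n ∈ tailSpan summingBasis n :=
  Submodule.le_topologicalClosure _
    (Submodule.subset_span ⟨n, le_refl n, rfl⟩)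

lemma tailNorm_ev0 (n : ℕ) : tailNorm summingBasis ev0 n = 1 := by
  refine le_antisymm ((tailNorm_le _ _ _).trans ev0_norm_le) ?_
  have h := (ev0.comp (tailSpan summingBasis n).subtypeL).le_opNorm
    ⟨summingBasis n, summingBasis_mem_tailSpan n⟩
  have hval : ‖(ev0.comp (tailSpan summingBasis n).subtypeL)
      ⟨summingBasis n, summingBasis_mem_tailSpan n⟩‖ = 1 := by
    simp [ContinuousLinearMap.comp_apply, ev0_summingBasis n]
  rw [hval] at h
  unfold tailNorm
  have hx : ‖(⟨summingBasis n, summingBasis_mem_tailSpan n⟩ :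
      ↥(tailSpan summingBasis n))‖ ≤ 1 := norm_summingBasis_le n
  nlinarith [norm_nonneg (ev0.comp (tailSpan summingBasis n).subtypeL)]

/-- for the summing basis `(sₙ)` of `c₀`, `sh((sₙ)) = 1`. -/
theorem sh_summingBasis_c0 : sh summingBasis = 1 := by
  have hub : ∀ c ∈ (fun g : czero →L[ℝ] ℝ =>
      limsup (tailNorm summingBasis g) atTop) '' {g | ‖g‖ ≤ 1}, c ≤ 1 := by
    rintro c ⟨g, hg, rfl⟩
    have hcob : IsCoboundedUnder (· ≤ ·) atTop (tailNorm summingBasis g) :=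
      (Filter.isBoundedUnder_of (r := (· ≥ ·)) (f := atTop)
        (u := tailNorm summingBasis g)
        ⟨0, fun n => tailNorm_nonneg _ _ n⟩).isCoboundedUnder_le
    exact limsup_le_of_le hcob (Eventually.of_forall fun n =>
      (tailNorm_le _ _ _).trans hg)
  have hmem : (1:ℝ) ∈ (fun g : czero →L[ℝ] ℝ =>
      limsup (tailNorm summingBasis g) atTop) '' {g | ‖g‖ ≤ 1} := by
    refine ⟨ev0, ev0_norm_le, ?_⟩
    show limsup (tailNorm summingBasis ev0) atTop = 1
    have : tailNorm summingBasis ev0 = fun _ => (1:ℝ) := funext tailNorm_ev0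
    rw [this]
    exact limsup_const 1
  exact le_antisymm (csSup_le ⟨1, hmem⟩ hub) (le_csSup ⟨1, hub⟩ hmem)
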